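/- The finite-horizon POMDP value function is piecewise linear and concave: for a finite-state, finite-observation, finite-action POMDP, each value function V_t defined by the backward Bellman recursion on beliefs is the pointwise minimum of a finite set of linear functions of the belief vector, i.e., V_t(π) = min_{α ∈ A_t} ⟨α, π⟩ for some finite set A_t ⊂ ℝ^{|S|}. -/

import Mathlib

open Finset

/-- Predicted observation probability `σ(π, u, y) = Σ_{x'} Q(y|x') Σ_x P(x'|x,u) π(x)`. -/
def pomdpPredObs {S O A : Type*} [Fintype S]
    (trans : A → S → S → ℝ) (obs : S → O → ℝ) (π : S → ℝ) (u : A) (y : O) : ℝ :=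
  ∑ x' : S, obs x' y * ∑ x : S, trans u x x' * π x

/-- Bayes belief update `φ(π, u, y)(x') = Q(y|x') Σ_x P(x'|x,u) π(x) / σ(π, u, y)`. -/
noncomputable def pomdpBayesUpdate {S O A : Type*} [Fintype S]
    (trans : A → S → S → ℝ) (obs : S → O → ℝ) (π : S → ℝ) (u : A) (y : O) : S → ℝ :=
  fun x' => obs x' y * (∑ x : S, trans u x x' * π x) / pomdpPredObs trans obs π u y

/-- Value functions of a finite POMDP by the backward Bellman recursion on beliefs, indexed by
the number `n` of steps to go: `V 0 π = ⟨c_T, π⟩` and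
`V (n+1) π = min_u [⟨c n (·,u), π⟩ + Σ_y σ(π,u,y) V n (φ(π,u,y))]`. -/
noncomputable def pomdpValue {S O A : Type*} [Fintype S] [Fintype O] [Fintype A] [Nonempty A]
    (trans : A → S → S → ℝ) (obs : S → O → ℝ)
    (c : ℕ → S → A → ℝ) (cT : S → ℝ) : ℕ → (S → ℝ) → ℝ
  | 0, π => ∑ x : S, cT x * π x
  | n + 1, π =>
      (Finset.univ.inf' Finset.univ_nonempty fun u : A =>
        (∑ x : S, c n x u * π x) +
          ∑ y : O, pomdpPredObs trans obs π u y *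
            pomdpValue trans obs c cT n (pomdpBayesUpdate trans obs π u y))


lemma my_const_add_inf' {β : Type*} (s : Finset β) (hs : s.Nonempty) (a : ℝ) (f : β → ℝ) :
    a + s.inf' hs f = s.inf' hs fun b => a + f b := by
  apply le_antisymm
  · exact le_inf' _ _ fun b hb => by gcongr; exact inf'_le _ hb
  · obtain ⟨b, hb, hb'⟩ := s.exists_mem_eq_inf' hs f
    rw [hb']
    exact inf'_le_of_le _ hb (le_refl _)

lemma my_const_mul_inf' {β : Type*} (s : Finset β) (hs : s.Nonempty) {a : ℝ} (ha : 0 < a)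
    (f : β → ℝ) : a * s.inf' hs f = s.inf' hs fun b => a * f b := by
  apply le_antisymm
  · exact le_inf' _ _ fun b hb => by gcongr; exact inf'_le _ hb
  · obtain ⟨b, hb, hb'⟩ := s.exists_mem_eq_inf' hs f
    rw [hb']
    exact inf'_le_of_le _ hb (le_refl _)

lemma my_sum_inf' {β γ : Type*} [Fintype γ] [DecidableEq γ] (s : Finset β) (hs : s.Nonempty)
    (f : γ → β → ℝ) :
    ∑ y : γ, s.inf' hs (f y) =
      (Fintype.piFinset fun _ : γ => s).inf'
        (by simpa [Fintype.piFinset_nonempty] using fun _ => hs)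
        (fun g => ∑ y : γ, f y (g y)) := by
  apply le_antisymm
  · apply le_inf'
    intro g hg
    apply Finset.sum_le_sum
    intro y _
    exact inf'_le _ (by exact Fintype.mem_piFinset.mp hg y)
  · have h : ∀ y : γ, ∃ b ∈ s, s.inf' hs (f y) = f y b := fun y => by
      obtain ⟨b, hb, hb'⟩ := s.exists_mem_eq_inf' hs (f y); exact ⟨b, hb, hb'⟩
    choose g hg hg' using h
    refine inf'_le_of_le _ (Fintype.mem_piFinset.mpr hg) ?_
    exact le_of_eq (Finset.sum_congr rfl fun y _ => (hg' y).symm)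


/-- Sondik (1971), cited in Corollary 1 of the paper: the finite-horizon POMDP value function
is piecewise linear and concave; each `V_t` is the pointwise minimum of a finite set of linear
functions of the belief vector, i.e. `V_t(π) = min_{α ∈ A_t} ⟨α, π⟩` for a finite nonempty set
`A_t ⊆ ℝ^{|S|}` of α-vectors. -/
theorem pomdpValue_piecewise_linear_concave
    {S O A : Type*} [Fintype S] [Fintype O] [Fintype A] [Nonempty A] [DecidableEq (S → ℝ)]
    (trans : A → S → S → ℝ) (obs : S → O → ℝ)
    (c : ℕ → S → A → ℝ) (cT : S → ℝ)
    (htrans_nonneg : ∀ u x x', 0 ≤ trans u x x')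
    (htrans_sum : ∀ u x, ∑ x' : S, trans u x x' = 1)
    (hobs_nonneg : ∀ x y, 0 ≤ obs x y)
    (hobs_sum : ∀ x, ∑ y : O, obs x y = 1) :
    ∀ n : ℕ, ∃ Aset : Finset (S → ℝ), ∃ hne : Aset.Nonempty,
      ∀ π ∈ stdSimplex ℝ S,
        pomdpValue trans obs c cT n π = Aset.inf' hne (fun α => ∑ x : S, α x * π x) := by
  classical
  intro n
  induction n with
  | zero =>
    refine ⟨{cT}, Finset.singleton_nonempty _, fun π _ => ?_⟩
    simp [pomdpValue]
  | succ n ih =>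
    obtain ⟨As, hne, hIH⟩ := ih
    set G : Finset (O → (S → ℝ)) := Fintype.piFinset fun _ : O => As with hGdef
    have hG : G.Nonempty := by
      rw [hGdef, Fintype.piFinset_nonempty]; exact fun _ => hne
    set F : A × (O → (S → ℝ)) → (S → ℝ) :=
      fun p x => c n x p.1 + ∑ y : O, ∑ x' : S, obs x' y * trans p.1 x x' * p.2 y x' with hFdef
    have hT : ((Finset.univ : Finset A) ×ˢ G).Nonempty :=
      Finset.univ_nonempty.product hG
    refine ⟨((Finset.univ : Finset A) ×ˢ G).image F, hT.image F, fun π hπ => ?_⟩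
    -- key per-(u,y) identity
    have key : ∀ (u : A) (y : O),
        pomdpPredObs trans obs π u y *
            pomdpValue trans obs c cT n (pomdpBayesUpdate trans obs π u y) =
          As.inf' hne fun α => ∑ x' : S, α x' * (obs x' y * ∑ x : S, trans u x x' * π x) := by
      intro u y
      set m : S → ℝ := fun x' => obs x' y * ∑ x : S, trans u x x' * π x with hmdef
      have hm : ∀ x', 0 ≤ m x' := fun x' =>
        mul_nonneg (hobs_nonneg _ _)
          (Finset.sum_nonneg fun x _ => mul_nonneg (htrans_nonneg _ _ _) (hπ.1 x))
      have hσdef : pomdpPredObs trans obs π u y = ∑ x' : S, m x' := rfl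
      have hσnn : 0 ≤ pomdpPredObs trans obs π u y :=
        hσdef ▸ Finset.sum_nonneg fun x' _ => hm x'
      rcases hσnn.lt_or_eq with hσpos | hσ0
      · -- σ > 0 : Bayes update is a valid belief
        have hσne : pomdpPredObs trans obs π u y ≠ 0 := ne_of_gt hσpos
        have hupd : pomdpBayesUpdate trans obs π u y =
            fun x' => m x' / pomdpPredObs trans obs π u y := rfl
        have hmem : pomdpBayesUpdate trans obs π u y ∈ stdSimplex ℝ S := by
          constructor
          · intro x'
            rw [hupd]
            exact div_nonneg (hm x') hσnn
          · rw [hupd]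
            rw [← Finset.sum_div, ← hσdef, div_self hσne]
        rw [hIH _ hmem, my_const_mul_inf' As hne hσpos]
        refine Finset.inf'_congr hne rfl fun α _ => ?_
        rw [Finset.mul_sum]
        refine Finset.sum_congr rfl fun x' _ => ?_
        rw [hupd]
        field_simp
        simp only [hmdef]
        ring
      · -- σ = 0 : every term vanishes
        have hm0 : ∀ x' ∈ (Finset.univ : Finset S), m x' = 0 :=
          (Finset.sum_eq_zero_iff_of_nonneg fun x' _ => hm x').mp (hσdef ▸ hσ0.symm)
        rw [← hσ0, zero_mul]
        symm
        have : ∀ α ∈ As, (∑ x' : S, α x' * m x') = 0 := fun α _ =>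
          Finset.sum_eq_zero fun x' hx' => by rw [hm0 x' hx', mul_zero]
        rw [Finset.inf'_congr hne rfl (fun α hα => this α hα), Finset.inf'_const]
    -- main chain
    rw [pomdpValue]
    have step1 : ∀ u : A,
        (∑ x : S, c n x u * π x) +
            ∑ y : O, pomdpPredObs trans obs π u y *
              pomdpValue trans obs c cT n (pomdpBayesUpdate trans obs π u y) =
          G.inf' hG fun g => (∑ x : S, c n x u * π x) +
            ∑ y : O, ∑ x' : S, g y x' * (obs x' y * ∑ x : S, trans u x x' * π x) := by
      intro u
      rw [Finset.sum_congr rfl fun y _ => key u y,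
        my_sum_inf' As hne (fun y α => ∑ x' : S, α x' * (obs x' y * ∑ x : S, trans u x x' * π x)),
        my_const_add_inf']
    calc (Finset.univ.inf' Finset.univ_nonempty fun u : A =>
            (∑ x : S, c n x u * π x) +
              ∑ y : O, pomdpPredObs trans obs π u y *
                pomdpValue trans obs c cT n (pomdpBayesUpdate trans obs π u y))
        = Finset.univ.inf' Finset.univ_nonempty fun u : A =>
            G.inf' hG fun g => (∑ x : S, c n x u * π x) +
              ∑ y : O, ∑ x' : S, g y x' * (obs x' y * ∑ x : S, trans u x x' * π x) :=
          Finset.inf'_congr Finset.univ_nonempty rfl fun u _ => step1 u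
      _ = ((Finset.univ : Finset A) ×ˢ G).inf' hT fun p =>
            (∑ x : S, c n x p.1 * π x) +
              ∑ y : O, ∑ x' : S, p.2 y x' * (obs x' y * ∑ x : S, trans p.1 x x' * π x) := by
          rw [Finset.inf'_product_left]
      _ = (((Finset.univ : Finset A) ×ˢ G).image F).inf' (hT.image F)
            (fun α => ∑ x : S, α x * π x) := by
          rw [Finset.inf'_image]
          refine Finset.inf'_congr hT rfl fun p _ => ?_
          show (∑ x : S, c n x p.1 * π x) + _ = ∑ x : S, F p x * π x
          rw [hFdef]
          simp only [add_mul, Finset.sum_add_distrib]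
          congr 1
          simp only [Finset.mul_sum, Finset.sum_mul]
          conv_rhs => rw [Finset.sum_comm]
          refine Finset.sum_congr rfl fun y _ => ?_
          rw [Finset.sum_comm]
          exact Finset.sum_congr rfl fun x' _ => Finset.sum_congr rfl fun x _ => by ring
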